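/- Fix a real number ξ ≥ 0. Then the function ν ↦ |cosh(√(ξ+iν))| (for ν real, where √ denotes the principal complex square root) is minimized at ν = 0, with minimum value cosh(√ξ); moreover it is monotone nondecreasing in |ν|. -/

import Mathlib

lemma absSq_cosh (σ χ : ℝ) :
    ‖Complex.cosh ((σ : ℂ) + (χ : ℝ) * Complex.I)‖ ^ 2
      = Real.sinh σ ^ 2 + Real.cos χ ^ 2 := by
  rw [Complex.cosh_add, Complex.cosh_mul_I, Complex.sinh_mul_I]
  have : (Complex.cosh σ * Complex.cos χ + Complex.sinh σ * (Complex.sin χ * Complex.I))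
      = ((Real.cosh σ * Real.cos χ : ℝ) : ℂ) + ((Real.sinh σ * Real.sin χ : ℝ) : ℂ) * Complex.I := by
    push_cast [Complex.ofReal_cosh, Complex.ofReal_sinh, Complex.ofReal_cos, Complex.ofReal_sin]
    ring
  rw [this, Complex.sq_norm, Complex.normSq_add_mul_I]
  nlinarith [Real.sin_sq_add_cos_sq χ, Real.cosh_sq σ]

lemma sinh_abs_sq (x : ℝ) : Real.sinh |x| ^ 2 = Real.sinh x ^ 2 := by
  rcases abs_cases x with ⟨h, _⟩ | ⟨h, _⟩ <;> rw [h] <;> simp [Real.sinh_neg]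

/-- `|cosh (√(ξ+iν))|²` in terms of `r = √(ξ²+ν²)`. -/
lemma Gsq (ξ ν : ℝ) :
    ‖Complex.cosh (((ξ : ℂ) + ν * Complex.I) ^ (1 / 2 : ℂ))‖ ^ 2
      = Real.sinh (Real.sqrt ((Real.sqrt (ξ ^ 2 + ν ^ 2) + ξ) / 2)) ^ 2
        + Real.cos (Real.sqrt ((Real.sqrt (ξ ^ 2 + ν ^ 2) - ξ) / 2)) ^ 2 := by
  set z : ℂ := (ξ : ℂ) + ν * Complex.I with hz
  set w : ℂ := z ^ (1 / 2 : ℂ) with hwdef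
  set σ := w.re
  set χ := w.im
  have hw2 : w ^ 2 = z := by
    have h := Complex.cpow_nat_inv_pow z (n := 2) two_ne_zero
    have he : ((2 : ℕ) : ℂ)⁻¹ = (1 / 2 : ℂ) := by norm_num
    rw [he] at h
    exact_mod_cast h
  have hre : σ ^ 2 - χ ^ 2 = ξ := by
    have h := congrArg Complex.re hw2
    simp [pow_two, Complex.mul_re, hz] at h
    nlinarith [h]
  have habs : σ ^ 2 + χ ^ 2 = Real.sqrt (ξ ^ 2 + ν ^ 2) := by
    have h1 : ‖w‖ ^ 2 = Real.sqrt (ξ ^ 2 + ν ^ 2) := by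
      rw [← norm_pow, hw2, hz, Complex.norm_def, Complex.normSq_add_mul_I]
    rw [Complex.sq_norm, Complex.normSq_apply] at h1
    nlinarith [h1]
  have hσ : σ ^ 2 = (Real.sqrt (ξ ^ 2 + ν ^ 2) + ξ) / 2 := by linarith
  have hχ : χ ^ 2 = (Real.sqrt (ξ ^ 2 + ν ^ 2) - ξ) / 2 := by linarith
  rw [← hσ, ← hχ, ← Complex.re_add_im w, absSq_cosh,
    Real.sqrt_sq_eq_abs, Real.sqrt_sq_eq_abs, sinh_abs_sq, Real.cos_abs]

lemma sin_sq_sub (u v : ℝ) : Real.sin u ^ 2 - Real.sin v ^ 2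
    = Real.sin (u + v) * Real.sin (u - v) := by
  rw [Real.sin_add, Real.sin_sub]
  nlinarith [Real.sin_sq_add_cos_sq u, Real.sin_sq_add_cos_sq v]

lemma sinh_sq_sub (u v : ℝ) : Real.sinh u ^ 2 - Real.sinh v ^ 2
    = Real.sinh (u + v) * Real.sinh (u - v) := by
  rw [Real.sinh_add, Real.sinh_sub]
  nlinarith [Real.cosh_sq u, Real.cosh_sq v]

lemma cos_sq_sqrt_diff {x y : ℝ} (hy : 0 ≤ y) (hxy : y ≤ x) :
    Real.cos (Real.sqrt y) ^ 2 - Real.cos (Real.sqrt x) ^ 2 ≤ x - y := by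
  set u := Real.sqrt x
  set v := Real.sqrt y
  have hu : 0 ≤ u := Real.sqrt_nonneg x
  have hv : 0 ≤ v := Real.sqrt_nonneg y
  have huv : v ≤ u := Real.sqrt_le_sqrt hxy
  have h1 : Real.cos v ^ 2 - Real.cos u ^ 2 = Real.sin (u + v) * Real.sin (u - v) := by
    have := sin_sq_sub u v
    nlinarith [Real.sin_sq_add_cos_sq u, Real.sin_sq_add_cos_sq v]
  have h2 : Real.sin (u + v) * Real.sin (u - v) ≤ (u + v) * (u - v) := by
    calc Real.sin (u + v) * Real.sin (u - v)
        ≤ |Real.sin (u + v) * Real.sin (u - v)| := le_abs_self _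
    _ = |Real.sin (u + v)| * |Real.sin (u - v)| := abs_mul _ _
    _ ≤ |u + v| * |u - v| :=
        mul_le_mul Real.abs_sin_le_abs Real.abs_sin_le_abs (abs_nonneg _) (abs_nonneg _)
    _ = (u + v) * (u - v) := by
        rw [abs_of_nonneg (by linarith), abs_of_nonneg (by linarith)]
  have hx2 : u ^ 2 = x := Real.sq_sqrt (hy.trans hxy)
  have hy2 : v ^ 2 = y := Real.sq_sqrt hy
  nlinarith

lemma sinh_sq_sqrt_diff {x y : ℝ} (hy : 0 ≤ y) (hxy : y ≤ x) :
    x - y ≤ Real.sinh (Real.sqrt x) ^ 2 - Real.sinh (Real.sqrt y) ^ 2 := by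
  set u := Real.sqrt x
  set v := Real.sqrt y
  have hu : 0 ≤ u := Real.sqrt_nonneg x
  have hv : 0 ≤ v := Real.sqrt_nonneg y
  have huv : v ≤ u := Real.sqrt_le_sqrt hxy
  have h1 := sinh_sq_sub u v
  have h2 : (u + v) * (u - v) ≤ Real.sinh (u + v) * Real.sinh (u - v) := by
    have ha : u + v ≤ Real.sinh (u + v) := Real.self_le_sinh_iff.2 (by linarith)
    have hb : u - v ≤ Real.sinh (u - v) := Real.self_le_sinh_iff.2 (by linarith)
    exact mul_le_mul ha hb (by linarith)
      (by linarith [Real.self_le_sinh_iff.2 (show (0:ℝ) ≤ u + v by linarith)])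
  have hx2 : u ^ 2 = x := Real.sq_sqrt (hy.trans hxy)
  have hy2 : v ^ 2 = y := Real.sq_sqrt hy
  nlinarith

lemma core_mono {a₁ b₁ a₂ b₂ : ℝ} (ha₁ : 0 ≤ a₁) (hb₁ : 0 ≤ b₁) (hb : b₁ ≤ b₂)
    (heq : a₂ - a₁ = b₂ - b₁) :
    Real.sinh (Real.sqrt a₁) ^ 2 + Real.cos (Real.sqrt b₁) ^ 2
      ≤ Real.sinh (Real.sqrt a₂) ^ 2 + Real.cos (Real.sqrt b₂) ^ 2 := by
  have h1 := cos_sq_sqrt_diff hb₁ hb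
  have h2 := sinh_sq_sqrt_diff (y := a₁) (x := a₂) ha₁ (by linarith)
  linarith

/-- For `ξ ≥ 0`, the function `ν ↦ |cosh (√(ξ + iν))|` (principal square root) attains its
minimum `cosh √ξ` at `ν = 0` and is nondecreasing in `|ν|`. -/
theorem abs_cosh_sqrt_min_nonneg (ξ : ℝ) (hξ : 0 ≤ ξ) :
    (‖Complex.cosh (((ξ : ℂ) + (0 : ℝ) * Complex.I) ^ (1 / 2 : ℂ))‖
      = Real.cosh (Real.sqrt ξ)) ∧
    (∀ ν : ℝ, Real.cosh (Real.sqrt ξ)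
      ≤ ‖Complex.cosh (((ξ : ℂ) + ν * Complex.I) ^ (1 / 2 : ℂ))‖) ∧
    (∀ ν₁ ν₂ : ℝ, |ν₁| ≤ |ν₂| →
      ‖Complex.cosh (((ξ : ℂ) + ν₁ * Complex.I) ^ (1 / 2 : ℂ))‖
        ≤ ‖Complex.cosh (((ξ : ℂ) + ν₂ * Complex.I) ^ (1 / 2 : ℂ))‖) := by
  -- basic facts about r ν = √(ξ² + ν²)
  have hrξ : ∀ ν : ℝ, ξ ≤ Real.sqrt (ξ ^ 2 + ν ^ 2) := by
    intro ν
    calc ξ = Real.sqrt (ξ ^ 2) := (Real.sqrt_sq hξ).symm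
    _ ≤ Real.sqrt (ξ ^ 2 + ν ^ 2) := Real.sqrt_le_sqrt (by nlinarith)
  have hGsq : ∀ ν : ℝ,
      ‖Complex.cosh (((ξ : ℂ) + ν * Complex.I) ^ (1 / 2 : ℂ))‖ ^ 2
        = Real.sinh (Real.sqrt ((Real.sqrt (ξ ^ 2 + ν ^ 2) + ξ) / 2)) ^ 2
          + Real.cos (Real.sqrt ((Real.sqrt (ξ ^ 2 + ν ^ 2) - ξ) / 2)) ^ 2 := fun ν => Gsq ξ ν
  -- value at 0
  have h0 : ‖Complex.cosh (((ξ : ℂ) + (0 : ℝ) * Complex.I) ^ (1 / 2 : ℂ))‖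
      = Real.cosh (Real.sqrt ξ) := by
    have h := hGsq 0
    have hr0 : Real.sqrt (ξ ^ 2 + (0:ℝ) ^ 2) = ξ := by
      rw [show ξ ^ 2 + (0:ℝ) ^ 2 = ξ ^ 2 by ring, Real.sqrt_sq hξ]
    rw [hr0, show (ξ + ξ) / 2 = ξ by ring, show (ξ - ξ) / 2 = (0:ℝ) by ring,
      Real.sqrt_zero, Real.cos_zero] at h
    have h2 : ‖Complex.cosh (((ξ : ℂ) + (0 : ℝ) * Complex.I) ^ (1 / 2 : ℂ))‖ ^ 2
        = Real.cosh (Real.sqrt ξ) ^ 2 := by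
      rw [h, Real.cosh_sq]; ring
    have := congrArg Real.sqrt h2
    rwa [Real.sqrt_sq (norm_nonneg _),
      Real.sqrt_sq (Real.cosh_pos _).le] at this
  refine ⟨h0, ?_, ?_⟩
  · -- minimum
    intro ν
    have hcore := core_mono (a₁ := ξ) (b₁ := 0)
      (a₂ := (Real.sqrt (ξ ^ 2 + ν ^ 2) + ξ) / 2)
      (b₂ := (Real.sqrt (ξ ^ 2 + ν ^ 2) - ξ) / 2)
      hξ le_rfl (by linarith [hrξ ν]) (by ring)
    rw [Real.sqrt_zero, Real.cos_zero] at hcore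
    have hsq : Real.cosh (Real.sqrt ξ) ^ 2
        ≤ ‖Complex.cosh (((ξ : ℂ) + ν * Complex.I) ^ (1 / 2 : ℂ))‖ ^ 2 := by
      rw [hGsq ν, Real.cosh_sq]
      linarith
    calc Real.cosh (Real.sqrt ξ) = Real.sqrt (Real.cosh (Real.sqrt ξ) ^ 2) :=
          (Real.sqrt_sq (Real.cosh_pos _).le).symm
    _ ≤ Real.sqrt (‖Complex.cosh (((ξ : ℂ) + ν * Complex.I) ^ (1 / 2 : ℂ))‖ ^ 2) :=
          Real.sqrt_le_sqrt hsq
    _ = _ := Real.sqrt_sq (norm_nonneg _)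
  · -- monotone in |ν|
    intro ν₁ ν₂ hν
    have hr : Real.sqrt (ξ ^ 2 + ν₁ ^ 2) ≤ Real.sqrt (ξ ^ 2 + ν₂ ^ 2) := by
      apply Real.sqrt_le_sqrt
      have : ν₁ ^ 2 ≤ ν₂ ^ 2 := by
        rw [← sq_abs ν₁, ← sq_abs ν₂]
        exact pow_le_pow_left₀ (abs_nonneg _) hν 2
      linarith
    have hcore := core_mono
      (a₁ := (Real.sqrt (ξ ^ 2 + ν₁ ^ 2) + ξ) / 2)
      (b₁ := (Real.sqrt (ξ ^ 2 + ν₁ ^ 2) - ξ) / 2)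
      (a₂ := (Real.sqrt (ξ ^ 2 + ν₂ ^ 2) + ξ) / 2)
      (b₂ := (Real.sqrt (ξ ^ 2 + ν₂ ^ 2) - ξ) / 2)
      (by positivity) (by linarith [hrξ ν₁]) (by linarith) (by ring)
    have hsq : ‖Complex.cosh (((ξ : ℂ) + ν₁ * Complex.I) ^ (1 / 2 : ℂ))‖ ^ 2
        ≤ ‖Complex.cosh (((ξ : ℂ) + ν₂ * Complex.I) ^ (1 / 2 : ℂ))‖ ^ 2 := by
      rw [hGsq ν₁, hGsq ν₂]; exact hcore
    calc ‖Complex.cosh (((ξ : ℂ) + ν₁ * Complex.I) ^ (1 / 2 : ℂ))‖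
        = Real.sqrt (‖Complex.cosh (((ξ : ℂ) + ν₁ * Complex.I) ^ (1 / 2 : ℂ))‖ ^ 2) :=
          (Real.sqrt_sq (norm_nonneg _)).symm
    _ ≤ Real.sqrt (‖Complex.cosh (((ξ : ℂ) + ν₂ * Complex.I) ^ (1 / 2 : ℂ))‖ ^ 2) :=
          Real.sqrt_le_sqrt hsq
    _ = _ := Real.sqrt_sq (norm_nonneg _)
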